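/- Let μ_1, μ_0 be probability measures on ℝ^d, and let h_1, h_0 : ℝ^d → [0,1] be measurable with ∫ h_s dμ_s > 0 and μ_s({x : h_s(x) = t}) = 0 for every t ∈ (0,1], for s ∈ {0,1}. Then for any constants a_1, a_0 > 0 there exists θ ∈ ℝ such that ∫ h_1·1{1 ≤ h_1·(2 − θ/a_1)} dμ_1 / ∫ h_1 dμ_1 = ∫ h_0·1{1 ≤ h_0·(2 + θ/a_0)} dμ_0 / ∫ h_0 dμ_0. -/

import Mathlib

open MeasureTheory Set Filter Topology

lemma aux_null {α : Type*} [MeasurableSpace α] (μ : Measure α) (h : α → ℝ)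
    (h01 : ∀ x, h x ∈ Icc (0:ℝ) 1)
    (hatom : ∀ t ∈ Ioc (0:ℝ) 1, μ {x | h x = t} = 0) (c : ℝ) :
    μ {x | h x * c = 1} = 0 := by
  by_cases hc : 1 ≤ c
  · have hc0 : 0 < c := lt_of_lt_of_le one_pos hc
    have hsub : {x | h x * c = 1} ⊆ {x | h x = 1 / c} := by
      intro x hx
      simp only [mem_setOf_eq] at *
      field_simp
      linarith [hx]
    refine measure_mono_null hsub (hatom _ ⟨by positivity, ?_⟩)
    rw [div_le_one hc0]
    exact hc
  · have he : {x | h x * c = 1} = ∅ := by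
      ext x
      simp only [mem_setOf_eq, mem_empty_iff_false, iff_false]
      intro hx
      push_neg at hc
      rcases le_or_gt c 0 with h' | h'
      · nlinarith [(h01 x).1, (h01 x).2]
      · nlinarith [(h01 x).1, (h01 x).2]
    simp [he]

lemma aux_cont {α : Type*} [MeasurableSpace α] (μ : Measure α) [IsProbabilityMeasure μ]
    (h : α → ℝ) (hm : Measurable h) (h01 : ∀ x, h x ∈ Icc (0:ℝ) 1)
    (hatom : ∀ t ∈ Ioc (0:ℝ) 1, μ {x | h x = t} = 0)
    (c : ℝ → ℝ) (hc : Continuous c) :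
    Continuous fun θ => ∫ x, h x * (if 1 ≤ h x * c θ then (1:ℝ) else 0) ∂μ := by
  rw [continuous_iff_continuousAt]
  intro θ0
  refine tendsto_integral_filter_of_dominated_convergence (fun _ => (1:ℝ)) ?_ ?_
    (integrable_const 1) ?_
  · filter_upwards with θ
    exact (hm.mul (Measurable.ite
      (measurableSet_le measurable_const (hm.mul_const _))
      measurable_const measurable_const)).aestronglyMeasurable
  · filter_upwards with θ
    filter_upwards with x
    have h1 := (h01 x).1
    have h2 := (h01 x).2
    rw [Real.norm_eq_abs, abs_mul]
    split_ifs <;> simp [abs_of_nonneg h1] <;> linarith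
  · have hnull := aux_null μ h h01 hatom (c θ0)
    have hae : ∀ᵐ x ∂μ, h x * c θ0 ≠ 1 := by
      rw [ae_iff]
      simpa [not_not] using hnull
    filter_upwards [hae] with x hx
    have hgc : Continuous fun θ => h x * c θ := continuous_const.mul hc
    rcases lt_or_gt_of_ne hx with hlt | hgt
    · have hev : ∀ᶠ θ in 𝓝 θ0, h x * c θ < 1 :=
        (hgc.tendsto θ0).eventually_lt_const hlt
      have heq : (fun _ : ℝ => h x * 0) =ᶠ[𝓝 θ0]
          fun θ => h x * (if 1 ≤ h x * c θ then (1:ℝ) else 0) := by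
        filter_upwards [hev] with θ hθ
        rw [if_neg (not_le.mpr hθ)]
      rw [if_neg (not_le.mpr hlt)]
      exact tendsto_const_nhds.congr' heq
    · have hev : ∀ᶠ θ in 𝓝 θ0, 1 ≤ h x * c θ := by
        filter_upwards [(hgc.tendsto θ0).eventually_const_lt hgt] with θ hθ
        exact hθ.le
      have heq : (fun _ : ℝ => h x * 1) =ᶠ[𝓝 θ0]
          fun θ => h x * (if 1 ≤ h x * c θ then (1:ℝ) else 0) := by
        filter_upwards [hev] with θ hθ
        rw [if_pos hθ]
      rw [if_pos hgt.le]
      exact tendsto_const_nhds.congr' heq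

theorem stmt_12 {d : ℕ} (μ1 μ0 : Measure (Fin d → ℝ))
    [IsProbabilityMeasure μ1] [IsProbabilityMeasure μ0]
    (h1 h0 : (Fin d → ℝ) → ℝ) (hm1 : Measurable h1) (hm0 : Measurable h0)
    (h101 : ∀ x, h1 x ∈ Icc (0:ℝ) 1) (h001 : ∀ x, h0 x ∈ Icc (0:ℝ) 1)
    (hpos1 : 0 < ∫ x, h1 x ∂μ1) (hpos0 : 0 < ∫ x, h0 x ∂μ0)
    (hatom1 : ∀ t ∈ Ioc (0:ℝ) 1, μ1 {x | h1 x = t} = 0)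
    (hatom0 : ∀ t ∈ Ioc (0:ℝ) 1, μ0 {x | h0 x = t} = 0)
    (a1 a0 : ℝ) (ha1 : 0 < a1) (ha0 : 0 < a0) :
    ∃ θ : ℝ,
      (∫ x, h1 x * (if 1 ≤ h1 x * (2 - θ / a1) then (1:ℝ) else 0) ∂μ1) / (∫ x, h1 x ∂μ1)
        = (∫ x, h0 x * (if 1 ≤ h0 x * (2 + θ / a0) then (1:ℝ) else 0) ∂μ0)
            / (∫ x, h0 x ∂μ0) := by
  set Φ : ℝ → ℝ := fun θ =>
    (∫ x, h1 x * (if 1 ≤ h1 x * (2 - θ / a1) then (1:ℝ) else 0) ∂μ1) / (∫ x, h1 x ∂μ1)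
      - (∫ x, h0 x * (if 1 ≤ h0 x * (2 + θ / a0) then (1:ℝ) else 0) ∂μ0)
          / (∫ x, h0 x ∂μ0) with hΦ
  have hcont : Continuous Φ := by
    apply Continuous.sub
    · exact (aux_cont μ1 h1 hm1 h101 hatom1 (fun θ => 2 - θ / a1)
        (by continuity)).div_const _
    · exact (aux_cont μ0 h0 hm0 h001 hatom0 (fun θ => 2 + θ / a0)
        (by continuity)).div_const _
  have hI1nonneg : ∀ θ : ℝ, 0 ≤ ∫ x, h1 x * (if 1 ≤ h1 x * (2 - θ / a1) then (1:ℝ) else 0) ∂μ1 := by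
    intro θ
    apply integral_nonneg
    intro x
    exact mul_nonneg (h101 x).1 (by split_ifs <;> norm_num)
  have hI0nonneg : ∀ θ : ℝ, 0 ≤ ∫ x, h0 x * (if 1 ≤ h0 x * (2 + θ / a0) then (1:ℝ) else 0) ∂μ0 := by
    intro θ
    apply integral_nonneg
    intro x
    exact mul_nonneg (h001 x).1 (by split_ifs <;> norm_num)
  have hb : Φ (2 * a1) ≤ 0 := by
    have hz : (2:ℝ) - (2 * a1) / a1 = 0 := by field_simp; norm_num
    have hI1 : (∫ x, h1 x * (if 1 ≤ h1 x * (2 - (2 * a1) / a1) then (1:ℝ) else 0) ∂μ1) = 0 := by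
      rw [hz]; simp; norm_num
    rw [hΦ]
    simp only [hI1, zero_div, zero_sub, neg_nonpos]
    exact div_nonneg (hI0nonneg _) hpos0.le
  have ha' : 0 ≤ Φ (-(2 * a0)) := by
    have hz : (2:ℝ) + (-(2 * a0)) / a0 = 0 := by field_simp; norm_num
    have hI0 : (∫ x, h0 x * (if 1 ≤ h0 x * (2 + (-(2 * a0)) / a0) then (1:ℝ) else 0) ∂μ0) = 0 := by
      rw [hz]; simp; norm_num
    rw [hΦ]
    simp only [hI0, zero_div, sub_zero]
    exact div_nonneg (hI1nonneg _) hpos1.le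
  have hle : (-(2 * a0)) ≤ 2 * a1 := by nlinarith
  have := intermediate_value_Icc' hle hcont.continuousOn (by exact ⟨hb, ha'⟩ :
    (0:ℝ) ∈ Icc (Φ (2 * a1)) (Φ (-(2 * a0))))
  obtain ⟨θ, -, hθ⟩ := this
  exact ⟨θ, sub_eq_zero.mp hθ⟩
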